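/- Let x_1, …, x_n ∈ ℝ^d be unit vectors, let b : ℕ → ℝ satisfy b_0 ≥ 1, b_k ≥ 1/k² for all k ≥ 1, and Σ_{k=0}^∞ b_k < ∞, and suppose the matrix H with H_{ab} = Σ_k b_k (x_a·x_b)^k is positive definite. Let g(t) = Σ_{k=0}^∞ a_k t^k be a power series with radius of convergence R_g, let β ∈ ℝ^d with β := ‖β‖ < R_g, and define y ∈ ℝⁿ by y_a = g(β · x_a). Then √(yᵀ H⁻¹ y) ≤ β g̃′(β) + g̃(0), where g̃(t) = Σ_{k=0}^∞ |a_k| t^k is the auxiliary function of g (so β g̃′(β) + g̃(0) = Σ_{k≥1} k|a_k|β^k + |a_0|, a convergent series since β < R_g). -/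

import Mathlib

open Matrix
open scoped RealInnerProductSpace

set_option maxHeartbeats 1000000

private lemma inner_pow_expand {d : ℕ} (v w : EuclideanSpace ℝ (Fin d)) (k : ℕ) :
    ⟪v, w⟫ ^ k = ∑ g : Fin k → Fin d, ∏ i, v (g i) * w (g i) := by
  have h : ⟪v, w⟫ = ∑ j, v j * w j := by
    simp [PiLp.inner_apply, RCLike.inner_apply, mul_comm]
  rw [h, Finset.sum_pow']
  simp

private lemma sum_sq_expand {α γ : Type*} [Fintype α] [Fintype γ] (F : α → γ → ℝ) :
    ∑ a : α, ∑ c : α, ∑ g : γ, F a g * F c g = ∑ g : γ, (∑ a : α, F a g) ^ 2 :=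
  calc ∑ a : α, ∑ c : α, ∑ g : γ, F a g * F c g
      = ∑ a : α, ∑ g : γ, ∑ c : α, F a g * F c g :=
        Finset.sum_congr rfl fun a _ => Finset.sum_comm
    _ = ∑ g : γ, ∑ a : α, ∑ c : α, F a g * F c g := Finset.sum_comm
    _ = ∑ g : γ, (∑ a : α, F a g) ^ 2 :=
        Finset.sum_congr rfl fun g _ => by rw [sq, Finset.sum_mul_sum]

private lemma sum_mul_expand {α γ : Type*} [Fintype α] [Fintype γ] (W : γ → ℝ) (F : α → γ → ℝ) :
    ∑ a : α, ∑ g : γ, W g * F a g = ∑ g : γ, W g * ∑ a : α, F a g :=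
  calc ∑ a : α, ∑ g : γ, W g * F a g
      = ∑ g : γ, ∑ a : α, W g * F a g := Finset.sum_comm
    _ = ∑ g : γ, W g * ∑ a : α, F a g :=
        Finset.sum_congr rfl fun g _ => (Finset.mul_sum _ _ _).symm

theorem stmt5 (n d : ℕ) (x : Fin n → EuclideanSpace ℝ (Fin d))
    (hx : ∀ a, ‖x a‖ = 1)
    (b : ℕ → ℝ) (hb0 : 1 ≤ b 0) (hbk : ∀ k : ℕ, 1 ≤ k → 1 / (k : ℝ) ^ 2 ≤ b k)
    (hb_sum : Summable b)
    (H : Matrix (Fin n) (Fin n) ℝ)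
    (hH : ∀ a c, H a c = ∑' k : ℕ, b k * ⟪x a, x c⟫ ^ k)
    (hHpd : H.PosDef)
    (a : ℕ → ℝ) (β : EuclideanSpace ℝ (Fin d))
    (hR : ∃ r : ℝ, ‖β‖ < r ∧ Summable (fun k : ℕ => |a k| * r ^ k))
    (y : Fin n → ℝ) (hy : ∀ c, y c = ∑' k : ℕ, a k * ⟪β, x c⟫ ^ k) :
    Real.sqrt (y ⬝ᵥ (H⁻¹ *ᵥ y)) ≤
      (∑' k : ℕ, (k : ℝ) * |a k| * ‖β‖ ^ k) + |a 0| := by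
  obtain ⟨r, hBr, hr_sum⟩ := hR
  have hB0 : (0:ℝ) ≤ ‖β‖ := norm_nonneg β
  have hr0 : 0 < r := lt_of_le_of_lt hB0 hBr
  have hbpos : ∀ k, 0 < b k := by
    intro k
    rcases Nat.eq_zero_or_pos k with hk | hk
    · subst hk; linarith
    · refine lt_of_lt_of_le ?_ (hbk k hk)
      positivity
  set u : Fin n → ℝ := H⁻¹ *ᵥ y with hu
  have hHu : H *ᵥ u = y := by
    rw [hu, Matrix.mulVec_mulVec,
      Matrix.mul_nonsing_inv _ (isUnit_iff_ne_zero.mpr hHpd.det_pos.ne'), Matrix.one_mulVec]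
  set Q : ℕ → ℝ := fun k => ∑ a', ∑ c', u a' * u c' * ⟪x a', x c'⟫ ^ k with hQdef
  set P : ℕ → ℝ := fun k => ∑ a', u a' * ⟪β, x a'⟫ ^ k with hPdef
  -- expansions
  have hQexp : ∀ k, Q k = ∑ g : Fin k → Fin d, (∑ a', u a' * ∏ i, x a' (g i)) ^ 2 := by
    intro k
    rw [hQdef]
    have h1 : ∀ a' c' : Fin n, u a' * u c' * ⟪x a', x c'⟫ ^ k
        = ∑ g : Fin k → Fin d,
            (u a' * ∏ i, x a' (g i)) * (u c' * ∏ i, x c' (g i)) := by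
      intro a' c'
      rw [inner_pow_expand, Finset.mul_sum]
      refine Finset.sum_congr rfl fun g _ => ?_
      rw [Finset.prod_mul_distrib]; ring
    simp only [h1]
    exact sum_sq_expand (γ := Fin k → Fin d) (fun a' g => u a' * ∏ i, x a' (g i))
  have hPexp : ∀ k, P k = ∑ g : Fin k → Fin d,
      (∏ i, β (g i)) * ∑ a', u a' * ∏ i, x a' (g i) := by
    intro k
    rw [hPdef]
    have h1 : ∀ a' : Fin n, u a' * ⟪β, x a'⟫ ^ k
        = ∑ g : Fin k → Fin d, (∏ i, β (g i)) * (u a' * ∏ i, x a' (g i)) := by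
      intro a'
      rw [inner_pow_expand, Finset.mul_sum]
      refine Finset.sum_congr rfl fun g _ => ?_
      rw [Finset.prod_mul_distrib]; ring
    simp only [h1]
    exact sum_mul_expand (γ := Fin k → Fin d) (fun g => ∏ i, β (g i)) (fun a' g => u a' * ∏ i, x a' (g i))
  have hQ0 : ∀ k, 0 ≤ Q k := by
    intro k; rw [hQexp k]
    exact Finset.sum_nonneg fun g _ => sq_nonneg _
  have hPQ : ∀ k, P k ^ 2 ≤ (‖β‖ ^ k) ^ 2 * Q k := by
    intro k
    have cs := Finset.sum_mul_sq_le_sq_mul_sq Finset.univ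
      (fun g : Fin k → Fin d => ∏ i, β (g i))
      (fun g : Fin k → Fin d => ∑ a', u a' * ∏ i, x a' (g i))
    have hw : ∑ g : Fin k → Fin d, (∏ i, β (g i)) ^ 2 = (‖β‖ ^ k) ^ 2 := by
      have h2 : ∀ g : Fin k → Fin d, (∏ i, β (g i)) ^ 2 = ∏ i, β (g i) * β (g i) := by
        intro g; rw [Finset.prod_mul_distrib, sq]
      simp only [h2]
      rw [← inner_pow_expand β β k, real_inner_self_eq_norm_sq, ← pow_mul, ← pow_mul,
        mul_comm k 2]
    rw [hPexp k, hQexp k]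
    calc (∑ g : Fin k → Fin d, (∏ i, β (g i)) * ∑ a', u a' * ∏ i, x a' (g i)) ^ 2
        ≤ (∑ g : Fin k → Fin d, (∏ i, β (g i)) ^ 2)
          * ∑ g : Fin k → Fin d, (∑ a', u a' * ∏ i, x a' (g i)) ^ 2 := cs
      _ = (‖β‖ ^ k) ^ 2 * ∑ g : Fin k → Fin d, (∑ a', u a' * ∏ i, x a' (g i)) ^ 2 := by
          rw [hw]
  -- summability of kernel series entrywise
  have hxx : ∀ a' c' : Fin n, |⟪x a', x c'⟫| ≤ 1 := by
    intro a' c'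
    have := abs_real_inner_le_norm (x a') (x c')
    rwa [hx a', hx c', one_mul] at this
  have hsum_H : ∀ a' c' : Fin n, Summable (fun k => b k * ⟪x a', x c'⟫ ^ k) := by
    intro a' c'
    refine Summable.of_norm_bounded hb_sum fun k => ?_
    rw [Real.norm_eq_abs, abs_mul, abs_of_pos (hbpos k), abs_pow]
    nth_rewrite 2 [show b k = b k * 1 by ring]
    exact mul_le_mul_of_nonneg_left (pow_le_one₀ (abs_nonneg _) (hxx a' c')) (hbpos k).le
  have hβx : ∀ c' : Fin n, |⟪β, x c'⟫| ≤ ‖β‖ := by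
    intro c'
    have := abs_real_inner_le_norm β (x c')
    rwa [hx c', mul_one] at this
  have hsum_t : ∀ c' : Fin n, Summable (fun k => a k * ⟪β, x c'⟫ ^ k) := by
    intro c'
    refine Summable.of_norm_bounded hr_sum fun k => ?_
    rw [Real.norm_eq_abs, abs_mul, abs_pow]
    refine mul_le_mul_of_nonneg_left ?_ (abs_nonneg _)
    exact pow_le_pow_left₀ (abs_nonneg _) (le_of_lt (lt_of_le_of_lt (hβx c') hBr)) k
  -- s = ∑' b k * Q k
  have hsQ : y ⬝ᵥ u = ∑' k, b k * Q k ∧ Summable (fun k => b k * Q k) := by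
    have step : ∀ a' : Fin n, y a' * u a'
        = ∑' k, ∑ c', u a' * u c' * (b k * ⟪x a', x c'⟫ ^ k) := by
      intro a'
      have hya : y a' = ∑ c', H a' c' * u c' := by
        rw [← hHu]; rfl
      rw [hya, Finset.sum_mul]
      have h2 : ∀ c' : Fin n, H a' c' * u c' * u a'
          = ∑' k, u a' * u c' * (b k * ⟪x a', x c'⟫ ^ k) := by
        intro c'
        rw [hH a' c', ← tsum_mul_right, ← tsum_mul_right]
        exact tsum_congr fun k => by ring
      rw [Finset.sum_congr rfl fun c' _ => h2 c']
      exact (Summable.tsum_finsetSum fun c' _ => ((hsum_H a' c').mul_left _)).symm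
    have hsum_inner : ∀ a' : Fin n,
        Summable (fun k => ∑ c', u a' * u c' * (b k * ⟪x a', x c'⟫ ^ k)) :=
      fun a' => summable_sum fun c' _ => (hsum_H a' c').mul_left _
    have hdot : y ⬝ᵥ u = ∑ a', y a' * u a' := rfl
    have hswap : y ⬝ᵥ u = ∑' k, ∑ a', ∑ c', u a' * u c' * (b k * ⟪x a', x c'⟫ ^ k) := by
      rw [hdot, Finset.sum_congr rfl fun a' _ => step a']
      exact (Summable.tsum_finsetSum fun a' _ => hsum_inner a').symm
    have hform : ∀ k, (∑ a', ∑ c', u a' * u c' * (b k * ⟪x a', x c'⟫ ^ k)) = b k * Q k := by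
      intro k
      rw [hQdef, Finset.mul_sum]
      refine Finset.sum_congr rfl fun a' _ => ?_
      rw [Finset.mul_sum]
      exact Finset.sum_congr rfl fun c' _ => by ring
    constructor
    · rw [hswap]; exact tsum_congr hform
    · have := summable_sum (s := Finset.univ)
        (f := fun a' : Fin n => fun k => ∑ c', u a' * u c' * (b k * ⟪x a', x c'⟫ ^ k))
        (fun a' _ => hsum_inner a')
      refine this.congr fun k => ?_
      exact hform k
  set s : ℝ := y ⬝ᵥ u with hsdef
  have hs0 : 0 ≤ s := by
    rw [hsQ.1]
    exact tsum_nonneg fun k => mul_nonneg (hbpos k).le (hQ0 k)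
  have hbQle : ∀ k, b k * Q k ≤ s := by
    intro k
    rw [hsQ.1]
    exact Summable.le_tsum hsQ.2 k fun j _ => mul_nonneg (hbpos j).le (hQ0 j)
  -- s = ∑' a k * P k
  have hsP : s = ∑' k, a k * P k ∧ Summable (fun k => a k * P k) := by
    have step : ∀ a' : Fin n, y a' * u a' = ∑' k, a k * ⟪β, x a'⟫ ^ k * u a' := by
      intro a'
      rw [hy a', ← tsum_mul_right]
    have hswap : s = ∑' k, ∑ a', a k * ⟪β, x a'⟫ ^ k * u a' := by
      rw [hsdef]
      have hdot : y ⬝ᵥ u = ∑ a', y a' * u a' := rfl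
      rw [hdot, Finset.sum_congr rfl fun a' _ => step a']
      exact (Summable.tsum_finsetSum fun a' _ => (hsum_t a').mul_right _).symm
    have hform : ∀ k, (∑ a', a k * ⟪β, x a'⟫ ^ k * u a') = a k * P k := by
      intro k
      rw [hPdef, Finset.mul_sum]
      exact Finset.sum_congr rfl fun a' _ => by ring
    constructor
    · rw [hswap]; exact tsum_congr hform
    · have := summable_sum (s := Finset.univ)
        (f := fun a' : Fin n => fun k => a k * ⟪β, x a'⟫ ^ k * u a')
        (fun a' _ => (hsum_t a').mul_right _)
      exact this.congr hform
  -- pointwise bound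
  set D : ℕ → ℝ := fun k => (k : ℝ) * |a k| * ‖β‖ ^ k + (if k = 0 then |a 0| else 0) with hDdef
  have hD0 : ∀ k, 0 ≤ D k := by
    intro k
    simp only [hDdef]
    refine add_nonneg (by positivity) ?_
    split_ifs <;> simp [abs_nonneg]
  have hptwise : ∀ k, |a k * P k| ≤ D k * Real.sqrt s := by
    intro k
    have hPabs : ∀ C : ℝ, 0 ≤ C → P k ^ 2 ≤ C ^ 2 * s → |P k| ≤ C * Real.sqrt s := by
      intro C hC h
      have h1 : |P k| = Real.sqrt (P k ^ 2) := (Real.sqrt_sq_eq_abs _).symm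
      rw [h1]
      have h2 : Real.sqrt (C ^ 2 * s) = C * Real.sqrt s := by
        rw [Real.sqrt_mul (sq_nonneg C), Real.sqrt_sq hC]
      rw [← h2]
      exact Real.sqrt_le_sqrt h
    rcases Nat.eq_zero_or_pos k with hk | hk
    · subst hk
      have hQle : Q 0 ≤ s := by
        have h1 := hbQle 0
        nlinarith [hQ0 0]
      have hP0 : |P 0| ≤ Real.sqrt s := by
        have := hPabs 1 one_pos.le (by simpa using le_trans (by simpa using hPQ 0) hQle)
        simpa using this
      have : |a 0 * P 0| = |a 0| * |P 0| := abs_mul _ _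
      rw [this, hDdef]
      simp only [if_pos rfl, Nat.cast_zero, zero_mul, pow_zero, mul_one, zero_add]
      exact mul_le_mul_of_nonneg_left hP0 (abs_nonneg _)
    · have hk2 : (0:ℝ) < (k:ℝ) ^ 2 := by positivity
      have hQle : Q k ≤ (k:ℝ) ^ 2 * s := by
        have h1 : 1 / (k:ℝ) ^ 2 ≤ b k := hbk k hk
        have h2 : 1 ≤ (k:ℝ) ^ 2 * b k := by
          rw [div_le_iff₀ hk2] at h1; linarith [h1]
        have h3 := hbQle k
        nlinarith [hQ0 k]
      have hPk : |P k| ≤ ((k:ℝ) * ‖β‖ ^ k) * Real.sqrt s := by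
        refine hPabs _ (by positivity) ?_
        calc P k ^ 2 ≤ (‖β‖ ^ k) ^ 2 * Q k := hPQ k
          _ ≤ (‖β‖ ^ k) ^ 2 * ((k:ℝ) ^ 2 * s) :=
              mul_le_mul_of_nonneg_left hQle (sq_nonneg _)
          _ = ((k:ℝ) * ‖β‖ ^ k) ^ 2 * s := by ring
      have habs : |a k * P k| = |a k| * |P k| := abs_mul _ _
      rw [habs, hDdef]
      simp only [if_neg (Nat.pos_iff_ne_zero.mp hk)]
      have := mul_le_mul_of_nonneg_left hPk (abs_nonneg (a k))
      calc |a k| * |P k| ≤ |a k| * (((k:ℝ) * ‖β‖ ^ k) * Real.sqrt s) := this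
        _ = ((k:ℝ) * |a k| * ‖β‖ ^ k + 0) * Real.sqrt s := by ring
  -- summability of D
  have hq1 : |‖β‖ / r| < 1 := by
    rw [abs_of_nonneg (by positivity)]
    rw [div_lt_one hr0]; exact hBr
  have hgeo : Summable (fun k : ℕ => (k:ℝ) * (‖β‖ / r) ^ k) := by
    have := summable_pow_mul_geometric_of_norm_lt_one (R := ℝ) 1 (by rwa [Real.norm_eq_abs])
    simpa using this
  set C : ℝ := ∑' k : ℕ, (k:ℝ) * (‖β‖ / r) ^ k with hCdef
  have hgeo_le : ∀ k : ℕ, (k:ℝ) * (‖β‖ / r) ^ k ≤ C := by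
    intro k
    exact Summable.le_tsum hgeo k fun j _ => by positivity
  have hsum_c : Summable (fun k : ℕ => (k:ℝ) * |a k| * ‖β‖ ^ k) := by
    refine Summable.of_nonneg_of_le (fun k => by positivity) (fun k => ?_) (hr_sum.mul_left C)
    have hBk : ‖β‖ ^ k = (‖β‖ / r) ^ k * r ^ k := by
      rw [div_pow, div_mul_cancel₀]
      positivity
    rw [hBk]
    have h1 : (k:ℝ) * |a k| * ((‖β‖ / r) ^ k * r ^ k)
        = ((k:ℝ) * (‖β‖ / r) ^ k) * (|a k| * r ^ k) := by ring
    rw [h1]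
    exact mul_le_mul_of_nonneg_right (hgeo_le k) (by positivity)
  have hsum_ind : Summable (fun k : ℕ => if k = 0 then |a 0| else 0) := by
    have := hasSum_ite_eq (0:ℕ) (|a 0|)
    refine this.summable.congr fun k => ?_
    simp [eq_comm]
  have hsumD : Summable D := by
    rw [hDdef]; exact hsum_c.add hsum_ind
  have htsumD : ∑' k, D k = (∑' k : ℕ, (k : ℝ) * |a k| * ‖β‖ ^ k) + |a 0| := by
    rw [hDdef, Summable.tsum_add hsum_c hsum_ind]
    congr 1
    have := tsum_ite_eq (0:ℕ) (fun _ : ℕ => |a 0|)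
    rw [← this]
    exact tsum_congr fun k => by simp [eq_comm]
  -- final chain
  have hsum_abs : Summable (fun k => |a k * P k|) :=
    Summable.of_nonneg_of_le (fun k => abs_nonneg _) hptwise (hsumD.mul_right _)
  have hchain : s ≤ (∑' k, D k) * Real.sqrt s := by
    calc s = ∑' k, a k * P k := hsP.1
      _ ≤ ∑' k, |a k * P k| := Summable.tsum_le_tsum (fun k => le_abs_self _) hsP.2 hsum_abs
      _ ≤ ∑' k, D k * Real.sqrt s := Summable.tsum_le_tsum hptwise hsum_abs (hsumD.mul_right _)
      _ = (∑' k, D k) * Real.sqrt s := tsum_mul_right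
  have hM0 : 0 ≤ ∑' k, D k := tsum_nonneg hD0
  have hfinal : Real.sqrt s ≤ ∑' k, D k := by
    rcases eq_or_lt_of_le hs0 with hse | hsp
    · rw [← hse]; simpa using hM0
    · have hsq : 0 < Real.sqrt s := Real.sqrt_pos.mpr hsp
      have : Real.sqrt s * Real.sqrt s ≤ (∑' k, D k) * Real.sqrt s := by
        rw [Real.mul_self_sqrt hs0]; exact hchain
      exact le_of_mul_le_mul_right this hsq
  rw [← htsumD]
  exact hfinal
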